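/- Let n, k be positive integers with 2k ≤ n, and let g : {0,1}^n → ℝ satisfy ĝ(∅) = 1 and ĝ(S) = 0 for all S ⊆ {1,…,n} with 1 ≤ |S| ≤ k−1. Let A be the adjacency operator of the Hamming graph on {0,1}^n. Then ⟨Ag, g⟩ ≤ n + (n − 2k)·E[g²]. -/

import Mathlib

/-- The adjacency operator of the Hamming graph on `{0,1}^n`. -/
def adjOp {n : ℕ} (f : (Fin n → Bool) → ℝ) (x : Fin n → Bool) : ℝ :=
  ∑ y ∈ Finset.univ.filter fun y => hammingDist x y = 1, f y

/-- The character `χ_S(x) = (−1)^{∑_{i ∈ S} x_i}` on `{0,1}^n`. -/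
def chi {n : ℕ} (S : Finset (Fin n)) (x : Fin n → Bool) : ℝ :=
  ∏ i ∈ S, if x i then (-1 : ℝ) else 1

/-- Fourier coefficient `f̂(S) = E_x[f(x) χ_S(x)]`, `x` uniform in `{0,1}^n`. -/
noncomputable def fourierHat {n : ℕ} (f : (Fin n → Bool) → ℝ) (S : Finset (Fin n)) : ℝ :=
  (∑ x, f x * chi S x) / 2 ^ n

/-- Inner product `⟨f, g⟩ = E_x[f(x)·g(x)]`, `x` uniform in `{0,1}^n`. -/
noncomputable def cubeInner {n : ℕ} (f g : (Fin n → Bool) → ℝ) : ℝ :=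
  (∑ x, f x * g x) / 2 ^ n

open Finset

lemma sum_chi_mul {n : ℕ} (x y : Fin n → Bool) :
    ∑ S : Finset (Fin n), chi S x * chi S y = if x = y then (2:ℝ)^n else 0 := by
  have h1 : ∑ S : Finset (Fin n), chi S x * chi S y
      = ∏ i, ((if x i then (-1:ℝ) else 1) * (if y i then -1 else 1) + 1) := by
    have hp := Finset.prod_add (fun i => (if x i then (-1:ℝ) else 1) * (if y i then -1 else 1))
      (fun _ => (1:ℝ)) Finset.univ
    simp only [Finset.prod_const_one, mul_one, Finset.powerset_univ] at hp
    rw [hp]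
    refine Finset.sum_congr rfl fun S _ => ?_
    rw [chi, chi, ← Finset.prod_mul_distrib]
  rw [h1]
  by_cases hxy : x = y
  · subst hxy
    rw [if_pos rfl]
    rw [show ((2:ℝ)^n) = ∏ _i : Fin n, (2:ℝ) by simp]
    refine Finset.prod_congr rfl fun i _ => ?_
    cases x i <;> norm_num
  · rw [if_neg hxy]
    obtain ⟨i, hi⟩ : ∃ i, x i ≠ y i := by
      by_contra h; push_neg at h; exact hxy (funext h)
    refine Finset.prod_eq_zero (Finset.mem_univ i) ?_
    cases hx : x i <;> cases hy : y i <;> simp_all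

lemma plancherel {n : ℕ} (f g : (Fin n → Bool) → ℝ) :
    ∑ S : Finset (Fin n), fourierHat f S * fourierHat g S = cubeInner f g := by
  unfold fourierHat cubeInner
  have h : ∑ S : Finset (Fin n), (∑ x, f x * chi S x) / 2^n * ((∑ y, g y * chi S y) / 2^n)
      = (∑ S : Finset (Fin n), ∑ x, ∑ y, (f x * g y) * (chi S x * chi S y)) / (2^n * 2^n) := by
    rw [Finset.sum_div]
    refine Finset.sum_congr rfl fun S _ => ?_
    rw [div_mul_div_comm, Finset.sum_mul_sum]
    congr 1
    refine Finset.sum_congr rfl fun x _ => Finset.sum_congr rfl fun y _ => by ring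
  rw [h, Finset.sum_comm]
  have h2 : ∀ x : Fin n → Bool, ∑ S : Finset (Fin n), ∑ y, (f x * g y) * (chi S x * chi S y)
      = f x * g x * 2^n := by
    intro x
    rw [Finset.sum_comm]
    have : ∀ y : Fin n → Bool, ∑ S : Finset (Fin n), (f x * g y) * (chi S x * chi S y)
        = (f x * g y) * (if x = y then (2:ℝ)^n else 0) := by
      intro y; rw [← Finset.mul_sum, sum_chi_mul]
    simp_rw [this, mul_ite, mul_zero]
    simp
  simp_rw [h2]
  rw [← Finset.sum_mul]
  field_simp

lemma neighbors_eq {n : ℕ} (x : Fin n → Bool) :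
    (Finset.univ.filter fun y => hammingDist x y = 1) =
      Finset.univ.image (fun i : Fin n => Function.update x i (!x i)) := by
  ext y
  simp only [Finset.mem_filter, Finset.mem_image, Finset.mem_univ, true_and]
  constructor
  · intro h
    rw [hammingDist, Finset.card_eq_one] at h
    obtain ⟨i, hi⟩ := h
    refine ⟨i, ?_⟩
    funext j
    by_cases hj : j = i
    · subst hj
      have h2 : j ∈ Finset.univ.filter fun i => x i ≠ y i := by rw [hi]; simp
      simp only [Finset.mem_filter] at h2
      rw [Function.update_self]
      cases hx : x j <;> cases hy : y j <;> simp_all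
    · rw [Function.update_of_ne hj]
      have h2 : j ∉ Finset.univ.filter fun i => x i ≠ y i := by rw [hi]; simp [hj]
      simp only [Finset.mem_filter, Finset.mem_univ, true_and, not_not] at h2
      exact h2
  · rintro ⟨i, rfl⟩
    rw [hammingDist]
    rw [Finset.card_eq_one]
    refine ⟨i, ?_⟩
    ext j
    simp only [Finset.mem_filter, Finset.mem_univ, true_and, Finset.mem_singleton]
    by_cases hj : j = i
    · subst hj; simp only [Function.update_self]; cases x j <;> simp
    · simp [Function.update_of_ne hj, hj]

lemma update_inj {n : ℕ} (x : Fin n → Bool) :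
    Function.Injective (fun i : Fin n => Function.update x i (!x i)) := by
  intro i j hij
  by_contra hne
  have h2 := congrFun hij i
  simp only [Function.update_self, Function.update_of_ne (Ne.symm hne)] at h2
  cases x i <;> simp_all

lemma chi_update {n : ℕ} (T : Finset (Fin n)) (x : Fin n → Bool) (i : Fin n) :
    chi T (Function.update x i (!x i)) = (if i ∈ T then (-1:ℝ) else 1) * chi T x := by
  by_cases hi : i ∈ T
  · rw [if_pos hi]
    unfold chi
    rw [← Finset.mul_prod_erase _ _ hi, ← Finset.mul_prod_erase _ (fun j => if x j then (-1:ℝ) else 1) hi]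
    have h1 : ∏ j ∈ T.erase i, (if Function.update x i (!x i) j then (-1:ℝ) else 1)
        = ∏ j ∈ T.erase i, (if x j then (-1:ℝ) else 1) :=
      Finset.prod_congr rfl fun j hj => by
        rw [Function.update_of_ne (Finset.ne_of_mem_erase hj)]
    rw [h1, Function.update_self]
    cases x i <;> simp
  · rw [if_neg hi, one_mul]
    refine Finset.prod_congr rfl fun j hj => ?_
    have hji : j ≠ i := by rintro rfl; exact hi hj
    rw [Function.update_of_ne hji]

lemma sum_chi_neighbors {n : ℕ} (T : Finset (Fin n)) (x : Fin n → Bool) :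
    ∑ y ∈ Finset.univ.filter (fun y => hammingDist x y = 1), chi T y
      = ((n:ℝ) - 2 * T.card) * chi T x := by
  rw [neighbors_eq, Finset.sum_image (fun i _ j _ h => update_inj x h)]
  simp_rw [chi_update]
  rw [← Finset.sum_mul]
  congr 1
  have : ∀ i : Fin n, (if i ∈ T then (-1:ℝ) else 1) = 1 - 2 * (if i ∈ T then 1 else 0) := by
    intro i; split <;> ring
  simp_rw [this]
  rw [Finset.sum_sub_distrib, ← Finset.mul_sum, Finset.sum_boole]
  simp

lemma fourierHat_adjOp {n : ℕ} (g : (Fin n → Bool) → ℝ) (T : Finset (Fin n)) :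
    fourierHat (adjOp g) T = ((n:ℝ) - 2 * T.card) * fourierHat g T := by
  unfold fourierHat adjOp
  rw [← mul_div_assoc]
  congr 1
  rw [Finset.mul_sum]
  simp_rw [Finset.sum_mul, Finset.sum_filter]
  rw [Finset.sum_comm]
  have : ∀ y : Fin n → Bool, ∑ x : Fin n → Bool, (if hammingDist x y = 1 then g y * chi T x else 0)
      = g y * (((n:ℝ) - 2 * T.card) * chi T y) := by
    intro y
    rw [← Finset.sum_filter, ← Finset.mul_sum]
    congr 1
    simp_rw [hammingDist_comm]
    exact sum_chi_neighbors T y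
  simp_rw [this]
  refine Finset.sum_congr rfl fun y _ => by ring

/-- If `2k ≤ n`, `ĝ(∅) = 1` and `ĝ(S) = 0` for all `1 ≤ |S| ≤ k − 1`, then
`⟨Ag, g⟩ ≤ n + (n − 2k)·E[g²]`. -/
theorem rayleigh_upper_bound (n k : ℕ) (hn : 0 < n) (hk : 0 < k) (hkn : 2 * k ≤ n)
    (g : (Fin n → Bool) → ℝ)
    (hg0 : fourierHat g ∅ = 1)
    (hgS : ∀ S : Finset (Fin n), 1 ≤ S.card → S.card ≤ k - 1 → fourierHat g S = 0) :
    cubeInner (adjOp g) g ≤ (n : ℝ) + ((n : ℝ) - 2 * k) * cubeInner g g := by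
  have hnk : (0:ℝ) ≤ (n:ℝ) - 2 * k := by
    have : ((2*k : ℕ) : ℝ) ≤ (n:ℝ) := Nat.cast_le.mpr hkn
    push_cast at this; linarith
  have hplan1 : cubeInner (adjOp g) g
      = ∑ S : Finset (Fin n), ((n:ℝ) - 2 * S.card) * (fourierHat g S)^2 := by
    rw [← plancherel]
    exact Finset.sum_congr rfl fun S _ => by rw [fourierHat_adjOp]; ring
  have hplan2 : cubeInner g g = ∑ S : Finset (Fin n), (fourierHat g S)^2 := by
    rw [← plancherel]; exact Finset.sum_congr rfl fun S _ => (sq _).symm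
  rw [hplan1, hplan2]
  rw [← Finset.sum_erase_add _ _ (Finset.mem_univ (∅ : Finset (Fin n)))]
  rw [hg0]
  simp only [Finset.card_empty, Nat.cast_zero, mul_zero, sub_zero, one_pow, mul_one]
  rw [add_comm ((n:ℝ)) (((n:ℝ) - 2*k) * _)]
  refine add_le_add ?_ le_rfl
  calc ∑ S ∈ Finset.univ.erase (∅ : Finset (Fin n)), ((n:ℝ) - 2 * S.card) * (fourierHat g S)^2
      ≤ ∑ S ∈ Finset.univ.erase (∅ : Finset (Fin n)), ((n:ℝ) - 2 * k) * (fourierHat g S)^2 := by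
        refine Finset.sum_le_sum fun S hS => ?_
        have hS1 : 1 ≤ S.card := by
          have := Finset.mem_erase.mp hS
          exact Finset.card_pos.mpr (Finset.nonempty_iff_ne_empty.mpr this.1)
        by_cases hSk : S.card ≤ k - 1
        · rw [hgS S hS1 hSk]; simp
        · push_neg at hSk
          have hkS : k ≤ S.card := by omega
          have : ((n:ℝ) - 2 * S.card) ≤ (n:ℝ) - 2 * k := by
            have : (k:ℝ) ≤ (S.card:ℝ) := Nat.cast_le.mpr hkS
            linarith
          exact mul_le_mul_of_nonneg_right this (sq_nonneg _)
    _ = ((n:ℝ) - 2 * k) * ∑ S ∈ Finset.univ.erase (∅ : Finset (Fin n)), (fourierHat g S)^2 := by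
        rw [Finset.mul_sum]
    _ ≤ ((n:ℝ) - 2 * k) * ∑ S : Finset (Fin n), (fourierHat g S)^2 := by
        refine mul_le_mul_of_nonneg_left ?_ hnk
        exact Finset.sum_le_sum_of_subset_of_nonneg (Finset.erase_subset _ _)
          (fun S _ _ => sq_nonneg _)
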